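/- Let N ≥ 1, let π : Fin N → ℝ, and let c̃ ∈ ℝ satisfy c̃ ≥ (max_n π_n) − (min_n π_n). Define ψ* : Fin N → ℝ by ψ*_j = π↓_j, the j-th largest component of π. Then: (a) ψ* is nonincreasing in j; (b) for every j ∈ {1, …, N} there exists h : Fin N → {0, 1} with Σ_n h_n ≥ N + 1 − j and c̃ · (1 − h_n) ≥ π_n − ψ*_j for every n; and (c) any ψ : Fin N → ℝ such that for every j some h : Fin N → {0, 1} satisfies Σ_n h_n ≥ N + 1 − j and c̃ · (1 − h_n) ≥ π_n − ψ_j for every n must satisfy ψ_j ≥ ψ*_j for every j. In particular, ψ* is the componentwise-minimal vector feasible for the ranking constraints. -/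

import Mathlib

/-- `sortDesc v` is `v` with its components rearranged in nonincreasing order:
its `j`-th component is the `j`-th largest component of `v`. -/
noncomputable def sortDesc {N : ℕ} (v : Fin N → ℝ) : Fin N → ℝ :=
  fun j => v (Tuple.sort v (Fin.rev j))

/-- The vector `ψ* = π↓` of ranked disutilities (here the index `j : Fin N` is 0-based, so the
paper's rank is `j + 1` and `N + 1 - (j + 1) = N - j`) is the componentwise-minimal vector
feasible for the ranking constraints (3.3)–(3.4): (a) it is nonincreasing; (b) it is feasible,
i.e. for each `j` some binary `h` satisfies `∑ n, h n ≥ N - j` and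
`c̃ * (1 - h n) ≥ π n - ψ*_j`; (c) any feasible `ψ` dominates it componentwise. -/
theorem ranked_disutilities_minimal_feasible
    {N : ℕ} (hN : 1 ≤ N) (π : Fin N → ℝ) (c : ℝ)
    (hc : Finset.univ.sup' (Finset.univ_nonempty_iff.mpr ⟨⟨0, hN⟩⟩) π -
        Finset.univ.inf' (Finset.univ_nonempty_iff.mpr ⟨⟨0, hN⟩⟩) π ≤ c) :
    Antitone (sortDesc π) ∧
    (∀ j : Fin N, ∃ h : Fin N → ℝ, (∀ n, h n = 0 ∨ h n = 1) ∧
      ((N : ℝ) - (j : ℕ) ≤ ∑ n, h n) ∧ ∀ n, π n - sortDesc π j ≤ c * (1 - h n)) ∧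
    (∀ ψ : Fin N → ℝ,
      (∀ j : Fin N, ∃ h : Fin N → ℝ, (∀ n, h n = 0 ∨ h n = 1) ∧
        ((N : ℝ) - (j : ℕ) ≤ ∑ n, h n) ∧ ∀ n, π n - ψ j ≤ c * (1 - h n)) →
      ∀ j : Fin N, sortDesc π j ≤ ψ j) := by
  have hmono : Monotone (π ∘ Tuple.sort π) := Tuple.monotone_sort π
  refine ⟨?_, ?_, ?_⟩
  · intro i j hij
    exact hmono (Fin.rev_le_rev.mpr hij)
  · intro j
    refine ⟨fun n => if π n ≤ sortDesc π j then 1 else 0,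
      fun n => by by_cases hp : π n ≤ sortDesc π j <;> simp [hp], ?_, ?_⟩
    · have hcard : (Finset.Iic (Fin.rev j)).card ≤
          (Finset.univ.filter (fun n => π n ≤ sortDesc π j)).card := by
        apply Finset.card_le_card_of_injOn (Tuple.sort π)
        · intro i hi
          simp only [Finset.mem_coe, Finset.mem_filter, Finset.mem_univ, true_and]
          exact hmono (Finset.mem_Iic.mp hi)
        · exact fun a _ b _ hab => (Tuple.sort π).injective hab
      rw [Finset.sum_boole]
      rw [Fin.card_Iic] at hcard
      have hv : (Fin.rev j : ℕ) = N - (j + 1) := Fin.val_rev j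
      have hj : (j : ℕ) < N := j.isLt
      have : N - (j : ℕ) ≤ (Finset.univ.filter (fun n => π n ≤ sortDesc π j)).card := by
        omega
      have hcast := Nat.cast_le (α := ℝ) |>.mpr this
      rw [Nat.cast_sub hj.le] at hcast
      exact hcast
    · intro n
      by_cases hpn : π n ≤ sortDesc π j
      · simp [hpn]
      · simp only [if_neg hpn, sub_zero, mul_one]
        have h1 : π n ≤ Finset.univ.sup' (Finset.univ_nonempty_iff.mpr ⟨⟨0, hN⟩⟩) π :=
          Finset.le_sup' π (Finset.mem_univ n)
        have h2 : Finset.univ.inf' (Finset.univ_nonempty_iff.mpr ⟨⟨0, hN⟩⟩) π ≤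
            sortDesc π j := Finset.inf'_le π (Finset.mem_univ _)
        linarith
  · intro ψ hfeas j
    obtain ⟨h, hbin, hsum, hcon⟩ := hfeas j
    set A := Finset.univ.filter (fun n => π n ≤ ψ j) with hA
    set B := (Finset.Ici (Fin.rev j)).image (Tuple.sort π) with hB
    have hmemA : ∀ n, h n = 1 → n ∈ A := by
      intro n hn
      have := hcon n
      rw [hn] at this
      simp only [hA, Finset.mem_filter, Finset.mem_univ, true_and]
      linarith
    have hsumA : ∑ n, h n ≤ (A.card : ℝ) := by
      have : ∑ n, h n ≤ ∑ n, (if n ∈ A then (1:ℝ) else 0) := by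
        apply Finset.sum_le_sum
        intro n _
        rcases hbin n with h0 | h1
        · rw [h0]; split <;> norm_num
        · rw [if_pos (hmemA n h1), h1]
      calc ∑ n, h n ≤ _ := this
        _ = (A.card : ℝ) := by rw [Finset.sum_boole]; simp [hA]
    have hAcard : N - (j : ℕ) ≤ A.card := by
      have : (N : ℝ) - (j : ℕ) ≤ (A.card : ℝ) := le_trans hsum hsumA
      have hj : (j : ℕ) < N := j.isLt
      have h2 : (N : ℝ) ≤ (A.card : ℝ) + (j : ℕ) := by linarith
      have := Nat.cast_le (α := ℝ) |>.mp (by push_cast; linarith : (N : ℝ) ≤ ((A.card + (j:ℕ) : ℕ) : ℝ))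
      omega
    have hBcard : B.card = (j : ℕ) + 1 := by
      rw [hB, Finset.card_image_of_injective _ (Tuple.sort π).injective, Fin.card_Ici]
      have hv : (Fin.rev j : ℕ) = N - (j + 1) := Fin.val_rev j
      have hj : (j : ℕ) < N := j.isLt
      omega
    have hinter : (A ∩ B).Nonempty := by
      rw [← Finset.card_pos]
      have h1 := Finset.card_inter_add_card_union A B
      have h2 : (A ∪ B).card ≤ N := by
        have := Finset.card_le_univ (A ∪ B)
        simpa using this
      have hj : (j : ℕ) < N := j.isLt
      omega
    obtain ⟨n, hn⟩ := hinter
    rw [Finset.mem_inter] at hn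
    obtain ⟨hnA, hnB⟩ := hn
    have h1 : π n ≤ ψ j := by
      simpa [hA] using hnA
    have h2 : sortDesc π j ≤ π n := by
      rw [hB, Finset.mem_image] at hnB
      obtain ⟨i, hi, rfl⟩ := hnB
      exact hmono (Finset.mem_Ici.mp hi)
    linarith
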